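/- arXiv:2009.05125 — 3 statements merged into one kernel-verified Lean document; each statement's English description precedes it below -/
import Mathlib

section
/- Let (a_N)_{N≥0} be a sequence of complex numbers with B := limsup_{N→∞} |a_N|^{1/N} < ∞. For each n ∈ ℕ set c_n := Σ_{N=0}^{n} (−1)^{N+n}·a_N·Surj(n,N) (a finite sum, since Surj(n,N) = 0 for N > n). Then for every complex number z with |z| < 1/(B+1), the series Σ_{n≥0} c_n·(−log(1−z))^n/n! converges absolutely and its sum equals Σ_{N≥0} a_N·z^N. -/
open Filter

/-- `Surj n m` is the number of surjective functions from `Fin n` to `Fin m`. -/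
noncomputable def Surj (n m : ℕ) : ℕ :=
  Nat.card {f : Fin n → Fin m // Function.Surjective f}

open Finset
lemma surj_eq_zero {n m : ℕ} (h : n < m) : Surj n m = 0 := by
  have : IsEmpty {f : Fin n → Fin m // Function.Surjective f} := by
    constructor
    rintro ⟨f, hf⟩
    exact absurd (Fintype.card_le_of_surjective f hf) (by simpa using h)
  simp [Surj]

lemma surj_formula (n m : ℕ) :
    (Surj n m : ℤ) = ∑ k ∈ Finset.range (m + 1),
      (-1 : ℤ) ^ k * (m.choose k) * ((m - k : ℕ) : ℤ) ^ n := by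
  classical
  have h1 : Surj n m = #(Finset.univ.filter fun f : Fin n → Fin m => Function.Surjective f) := by
    rw [Surj, Nat.card_eq_fintype_card, Fintype.card_subtype]
  set S : Fin m → Finset (Fin n → Fin m) :=
    fun i => Finset.univ.filter fun f => ∀ x, f x ≠ i with hS
  have h2 : (Finset.univ.filter fun f : Fin n → Fin m => Function.Surjective f)
      = Finset.univ.inf fun i => (S i)ᶜ := by
    ext f
    rw [Finset.mem_filter]
    simp only [mem_filter, mem_univ, true_and, Finset.mem_inf, Finset.mem_compl, hS,
      not_forall, not_not, Function.Surjective]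
    tauto
  have h3 : ∀ t : Finset (Fin m), #(t.inf S) = (m - #t) ^ n := by
    intro t
    have : t.inf S = Fintype.piFinset fun _ : Fin n => tᶜ := by
      ext f
      simp only [Finset.mem_inf, Fintype.mem_piFinset, Finset.mem_compl, hS, mem_filter,
        mem_univ, true_and]
      exact ⟨fun h x hx => h (f x) hx x rfl, fun h i hi x hfx => h x (hfx ▸ hi)⟩
    rw [this, Fintype.card_piFinset]
    simp [Finset.card_compl]
  rw [h1, h2, Finset.inclusion_exclusion_card_inf_compl]
  calc ∑ t ∈ (Finset.univ : Finset (Fin m)).powerset, (-1 : ℤ) ^ #t * #(t.inf S)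
      = ∑ t ∈ (Finset.univ : Finset (Fin m)).powerset,
          ((-1 : ℤ) ^ #t * ((m - #t : ℕ) : ℤ) ^ n) := by
        refine Finset.sum_congr rfl fun t _ => ?_
        rw [h3 t]; push_cast; ring
    _ = ∑ k ∈ Finset.range (#(Finset.univ : Finset (Fin m)) + 1), (#(Finset.univ : Finset (Fin m))).choose k •
          ((-1 : ℤ) ^ k * ((m - k : ℕ) : ℤ) ^ n) :=
        Finset.sum_powerset_apply_card (fun k => (-1 : ℤ) ^ k * ((m - k : ℕ) : ℤ) ^ n)
    _ = _ := by
        rw [Finset.card_univ, Fintype.card_fin]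
        refine Finset.sum_congr rfl fun k _ => ?_
        simp [nsmul_eq_mul]; ring

lemma surj_formula_c (n m : ℕ) :
    (Surj n m : ℂ) = ∑ k ∈ Finset.range (m + 1),
      (-1 : ℂ) ^ k * (m.choose k) * ((m - k : ℕ) : ℂ) ^ n := by
  have := surj_formula n m
  have h2 : ((Surj n m : ℤ) : ℂ) = ((∑ k ∈ Finset.range (m + 1),
      (-1 : ℤ) ^ k * (m.choose k) * ((m - k : ℕ) : ℤ) ^ n : ℤ) : ℂ) := by exact_mod_cast this
  push_cast at h2
  exact_mod_cast h2

lemma egf_surj (m : ℕ) (x : ℂ) :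
    HasSum (fun n : ℕ => (Surj n m : ℂ) * x ^ n / (Nat.factorial n : ℂ))
      ((Complex.exp x - 1) ^ m) := by
  have key : ∀ k ∈ Finset.range (m + 1),
      HasSum (fun n : ℕ => (-1 : ℂ) ^ k * (m.choose k) * (((m - k : ℕ) : ℂ) * x) ^ n
        / (Nat.factorial n : ℂ))
        ((-1 : ℂ) ^ k * (m.choose k) * Complex.exp (((m - k : ℕ) : ℂ) * x)) := by
    intro k _
    have h := NormedSpace.expSeries_div_hasSum_exp (((m - k : ℕ) : ℂ) * x)
    rw [← Complex.exp_eq_exp_ℂ] at h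
    simpa [mul_div_assoc] using h.mul_left ((-1 : ℂ) ^ k * (m.choose k))
  have hsum := hasSum_sum key
  have hpt : (fun n : ℕ => ∑ k ∈ Finset.range (m + 1),
      (-1 : ℂ) ^ k * (m.choose k) * (((m - k : ℕ) : ℂ) * x) ^ n / (Nat.factorial n : ℂ))
      = fun n : ℕ => (Surj n m : ℂ) * x ^ n / (Nat.factorial n : ℂ) := by
    funext n
    rw [surj_formula_c n m, Finset.sum_mul, Finset.sum_div]
    refine Finset.sum_congr rfl fun k _ => ?_
    rw [mul_pow]; ring
  rw [hpt] at hsum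
  convert hsum using 1
  rw [sub_eq_add_neg, add_comm, add_pow]
  refine Finset.sum_congr rfl fun k hk => ?_
  rw [Complex.exp_nat_mul]
  rw [Finset.mem_range, Nat.lt_succ_iff] at hk
  ring_nf

lemma egf_surj_real (m : ℕ) (r : ℝ) :
    HasSum (fun n : ℕ => (Surj n m : ℝ) * r ^ n / (Nat.factorial n : ℝ))
      ((Real.exp r - 1) ^ m) := by
  rw [← Complex.hasSum_ofReal]
  have := egf_surj m (r : ℂ)
  convert this using 2 with n
  · push_cast; ring
  · push_cast [Complex.ofReal_exp]; ring


set_option maxHeartbeats 2000000 in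
set_option maxRecDepth 8000 in
/-- Let `(a_N)` be a sequence of complex numbers with
`B := limsup |a_N|^{1/N} < ∞` (i.e. the sequence `|a_N|^{1/N}` is bounded above and its
limsup equals the real number `B`). Set
`c_n := Σ_{N=0}^{n} (−1)^{N+n}·a_N·Surj(n,N)`. Then for every complex `z` with
`|z| < 1/(B+1)`, the series `Σ_n c_n·(−log(1−z))^n/n!` converges absolutely and its
sum equals `Σ_N a_N·z^N`. -/
theorem stmt3 (a : ℕ → ℂ) (B : ℝ)
    (hbdd : IsBoundedUnder (· ≤ ·) atTop (fun N : ℕ => ‖a N‖ ^ ((N : ℝ)⁻¹)))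
    (hB : Filter.limsup (fun N : ℕ => ‖a N‖ ^ ((N : ℝ)⁻¹)) atTop = B)
    (c : ℕ → ℂ)
    (hc : ∀ n : ℕ, c n = ∑ N ∈ Finset.range (n + 1), (-1 : ℂ) ^ (N + n) * a N * (Surj n N : ℂ))
    (z : ℂ) (hz : ‖z‖ < 1 / (B + 1)) :
    Summable (fun n : ℕ =>
      ‖c n * (-Complex.log (1 - z)) ^ n / (Nat.factorial n : ℂ)‖) ∧
    ∑' n : ℕ, c n * (-Complex.log (1 - z)) ^ n / (Nat.factorial n : ℂ) =
      ∑' N : ℕ, a N * z ^ N := by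
  -- B ≥ 0
  have hB0 : 0 ≤ B := by
    rw [← hB]
    refine Filter.le_limsup_of_frequently_le ?_ hbdd
    exact Filter.Frequently.of_forall fun N => Real.rpow_nonneg (norm_nonneg _) _
  have hB1 : (0 : ℝ) < B + 1 := by linarith
  have hz1 : ‖z‖ < 1 := lt_of_lt_of_le hz (by
    rw [div_le_one hB1]; linarith)
  have hz0 : (0 : ℝ) ≤ ‖z‖ := norm_nonneg z
  have h1z : (1 : ℂ) - z ≠ 0 := by
    intro h
    have : z = 1 := by linear_combination -h
    simp [this] at hz1
  set w : ℂ := -Complex.log (1 - z) with hw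
  -- exp (-w) = 1 - z
  have hexp : Complex.exp (-w) = 1 - z := by
    rw [hw, neg_neg, Complex.exp_log h1z]
  -- bound on ‖w‖
  have hlogsum := Complex.hasSum_taylorSeries_neg_log hz1
  have hnormsum : HasSum (fun n : ℕ => ‖z‖ ^ n / n) (-Real.log (1 - ‖z‖)) := by
    have h := Real.hasSum_pow_div_log_of_abs_lt_one (x := ‖z‖) (by rwa [abs_of_nonneg hz0])
    have := (Finset.range 1).sum_eq_zero (f := fun n : ℕ => ‖z‖ ^ n / n) (by simp)
    rw [← hasSum_nat_add_iff' 1]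
    simpa [this] using h
  have hwle : ‖w‖ ≤ -Real.log (1 - ‖z‖) := by
    rw [hw, ← hlogsum.tsum_eq, ← hnormsum.tsum_eq]
    refine norm_tsum_le_tsum_norm ?_ |>.trans (le_of_eq ?_)
    · refine hnormsum.summable.congr fun n => ?_
      simp [norm_div, norm_pow]
    · refine tsum_congr fun n => ?_
      simp [norm_div, norm_pow]
  set t : ℝ := Real.exp ‖w‖ - 1 with ht
  have ht0 : 0 ≤ t := by
    rw [ht]; have := Real.one_le_exp (norm_nonneg w); linarith
  have htle : t ≤ ‖z‖ / (1 - ‖z‖) := by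
    rw [ht]
    have h2 : Real.exp ‖w‖ ≤ (1 - ‖z‖)⁻¹ := by
      calc Real.exp ‖w‖ ≤ Real.exp (-Real.log (1 - ‖z‖)) := Real.exp_le_exp.2 hwle
        _ = (1 - ‖z‖)⁻¹ := by rw [Real.exp_neg, Real.exp_log (by linarith)]
    have hne : (1 : ℝ) - ‖z‖ ≠ 0 := by linarith
    have h3 : (1 - ‖z‖)⁻¹ - 1 = ‖z‖ / (1 - ‖z‖) := by
      rw [inv_eq_one_div, div_sub_one hne]
      ring_nf
    linarith
  have hBt : B * t < 1 := by
    have h4 : ‖z‖ * (B + 1) < 1 := by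
      rw [div_eq_inv_mul, lt_inv_mul_iff₀ hB1] at hz
      linarith [hz]
    have h5 : B * (‖z‖ / (1 - ‖z‖)) < 1 := by
      rw [mul_div_assoc', div_lt_one (by linarith)]
      nlinarith
    calc B * t ≤ B * (‖z‖ / (1 - ‖z‖)) := by
          exact mul_le_mul_of_nonneg_left htle hB0
      _ < 1 := h5
  set ε : ℝ := (1 - B * t) / (2 * (t + 1)) with hε
  have hε0 : 0 < ε := by
    apply div_pos (by linarith) (by linarith)
  have hq : (B + ε) * t < 1 := by
    have : ε * t ≤ ε * (t + 1) := by nlinarith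
    have h6 : ε * (t + 1) = (1 - B * t) / 2 := by
      rw [hε]; field_simp
    nlinarith
  set q : ℝ := (B + ε) * t with hqdef
  have hq0 : 0 ≤ q := mul_nonneg (by linarith) ht0
  -- bound ‖a N‖ ≤ C * (B+ε)^N
  have hBε : 0 < B + ε := by linarith
  obtain ⟨n₀, hn₀⟩ : ∃ n₀ : ℕ, ∀ N ≥ n₀, ‖a N‖ ^ ((N : ℝ)⁻¹) < B + ε := by
    have := Filter.eventually_lt_of_limsup_lt (b := B + ε) (by rw [hB]; linarith) hbdd
    exact Filter.eventually_atTop.1 this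
  obtain ⟨C, hC1, hC⟩ : ∃ C : ℝ, 1 ≤ C ∧ ∀ N, ‖a N‖ ≤ C * (B + ε) ^ N := by
    refine ⟨1 + ∑ N ∈ Finset.range (n₀ + 1), ‖a N‖ / (B + ε) ^ N, by
      have : 0 ≤ ∑ N ∈ Finset.range (n₀ + 1), ‖a N‖ / (B + ε) ^ N := by positivity
      linarith, fun N => ?_⟩
    by_cases hN : n₀ + 1 ≤ N
    · have hN1 : N ≠ 0 := by omega
      have := hn₀ N (by omega)
      have h7 : ‖a N‖ = (‖a N‖ ^ ((N : ℝ)⁻¹)) ^ N :=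
        (Real.rpow_inv_natCast_pow (norm_nonneg _) hN1).symm
      have h8 : (‖a N‖ ^ ((N : ℝ)⁻¹)) ^ N ≤ (B + ε) ^ N :=
        pow_le_pow_left₀ (Real.rpow_nonneg (norm_nonneg _) _) this.le N
      have h9 : (B + ε) ^ N ≤ (1 + ∑ N ∈ Finset.range (n₀ + 1), ‖a N‖ / (B + ε) ^ N) * (B + ε) ^ N := by
        have hS : 0 ≤ ∑ N ∈ Finset.range (n₀ + 1), ‖a N‖ / (B + ε) ^ N := by positivity
        have hp : (0:ℝ) ≤ (B + ε) ^ N := by positivity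
        nlinarith
      linarith [h7 ▸ h8]
    · push_neg at hN
      have hmem : N ∈ Finset.range (n₀ + 1) := Finset.mem_range.2 hN
      have h10 : ‖a N‖ / (B + ε) ^ N ≤ ∑ M ∈ Finset.range (n₀ + 1), ‖a M‖ / (B + ε) ^ M :=
        Finset.single_le_sum (f := fun M => ‖a M‖ / (B + ε) ^ M)
          (fun M _ => by positivity) hmem
      have hp : (0:ℝ) < (B + ε) ^ N := by positivity
      rw [div_le_iff₀ hp] at h10
      nlinarith [hp]
  -- the double-indexed family
  set g : ℕ × ℕ → ℂ := fun p =>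
    (-1 : ℂ) ^ (p.1 + p.2) * a p.1 * (Surj p.2 p.1 : ℂ) * w ^ p.2 / (Nat.factorial p.2 : ℂ)
    with hg
  have hnormg : ∀ p : ℕ × ℕ, ‖g p‖ =
      ‖a p.1‖ * ((Surj p.2 p.1 : ℝ) * ‖w‖ ^ p.2 / (Nat.factorial p.2 : ℝ)) := by
    intro p
    rw [hg]
    simp only [norm_div, norm_mul, norm_pow, norm_neg, norm_one, one_pow, one_mul,
      Complex.norm_natCast]
    push_cast
    ring
  -- row sums of norms
  have hrow : ∀ N : ℕ, HasSum (fun n => ‖g (N, n)‖) (‖a N‖ * t ^ N) := by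
    intro N
    have := (egf_surj_real N ‖w‖).mul_left ‖a N‖
    rw [← ht] at this
    exact this.congr_fun fun n => hnormg (N, n)
  -- summability of the double family of norms
  have hrowsummable : Summable (fun N : ℕ => ‖a N‖ * t ^ N) := by
    refine Summable.of_nonneg_of_le (fun N => by positivity) (fun N => ?_)
      (((summable_geometric_of_lt_one hq0 hq).mul_left C))
    calc ‖a N‖ * t ^ N ≤ (C * (B + ε) ^ N) * t ^ N := by
          exact mul_le_mul_of_nonneg_right (hC N) (pow_nonneg ht0 N)
      _ = C * q ^ N := by rw [hqdef, mul_pow]; ring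
  have hgnorm_summable : Summable (fun p : ℕ × ℕ => ‖g p‖) := by
    rw [summable_prod_of_nonneg (fun p => norm_nonneg _)]
    constructor
    · intro N; exact (hrow N).summable
    · refine hrowsummable.congr fun N => ?_
      exact ((hrow N).tsum_eq).symm
  have hgsummable : Summable g := hgnorm_summable.of_norm
  -- row sums of g : equal a N * z^N
  have hrowg : ∀ N : ℕ, HasSum (fun n => g (N, n)) (a N * z ^ N) := by
    intro N
    have h := (egf_surj N (-w)).mul_left ((-1 : ℂ) ^ N * a N)
    have hval : (-1 : ℂ) ^ N * a N * (Complex.exp (-w) - 1) ^ N = a N * z ^ N := by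
      rw [hexp, show (1 : ℂ) - z - 1 = -z from by ring, neg_pow]
      have h2 : ((-1 : ℂ)) ^ N * (-1 : ℂ) ^ N = 1 := by
        rw [← pow_add]
        exact Even.neg_one_pow ⟨N, rfl⟩
      linear_combination a N * z ^ N * h2
    rw [hval] at h
    refine h.congr_fun fun n => ?_
    show (-1 : ℂ) ^ (N + n) * a N * (Surj n N : ℂ) * w ^ n / (Nat.factorial n : ℂ)
        = (-1 : ℂ) ^ N * a N * ((Surj n N : ℂ) * (-w) ^ n / (Nat.factorial n : ℂ))
    rw [neg_pow, pow_add]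
    have h3 : ((-1 : ℂ)) ^ (n * 2) = 1 := Even.neg_one_pow ⟨n, by ring⟩
    ring_nf
  -- column sums of g
  have hcol : ∀ n : ℕ, ∑' N, g (N, n) = c n * w ^ n / (Nat.factorial n : ℂ) := by
    intro n
    have hvanish : ∀ N ∉ Finset.range (n + 1), g (N, n) = 0 := by
      intro N hN
      rw [Finset.mem_range] at hN
      push_neg at hN
      have hs : Surj n N = 0 := surj_eq_zero (by omega)
      show (-1 : ℂ) ^ (N + n) * a N * (Surj n N : ℂ) * w ^ n / (Nat.factorial n : ℂ) = 0
      rw [hs]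
      simp
    rw [tsum_eq_sum hvanish, hc n, Finset.sum_mul, Finset.sum_div]
  have hswap : Summable (fun p : ℕ × ℕ => ‖g p.swap‖) := hgnorm_summable.prod_symm
  have hcolnorm := (summable_prod_of_nonneg
    (f := fun p : ℕ × ℕ => ‖g p.swap‖) (fun p => norm_nonneg _)).1 hswap
  have hsummand : ∀ n, ‖c n * w ^ n / (Nat.factorial n : ℂ)‖ ≤ ∑' N, ‖g (N, n)‖ := by
    intro n
    rw [← hcol n]
    exact norm_tsum_le_tsum_norm (hcolnorm.1 n)
  have hgoal1 : Summable fun n => ‖c n * w ^ n / (Nat.factorial n : ℂ)‖ :=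
    Summable.of_nonneg_of_le (fun n => norm_nonneg _) hsummand hcolnorm.2
  refine ⟨hgoal1, ?_⟩
  have hg_tsum1 : ∑' p : ℕ × ℕ, g p = ∑' N : ℕ, a N * z ^ N := by
    rw [Summable.tsum_prod hgsummable]
    exact tsum_congr fun N => (hrowg N).tsum_eq
  have hg_tsum2 : ∑' p : ℕ × ℕ, g p = ∑' n : ℕ, ∑' N : ℕ, g (N, n) := by
    rw [← (Equiv.prodComm ℕ ℕ).tsum_eq g]
    exact Summable.tsum_prod hgsummable.prod_symm
  calc ∑' n : ℕ, c n * w ^ n / (Nat.factorial n : ℂ)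
      = ∑' n : ℕ, ∑' N : ℕ, g (N, n) := tsum_congr fun n => (hcol n).symm
    _ = ∑' p : ℕ × ℕ, g p := hg_tsum2.symm
    _ = ∑' N : ℕ, a N * z ^ N := hg_tsum1
end

section
/- For every real t ≥ 0 and every real r with 0 ≤ r < 1, the double series with nonnegative terms Σ_{m,n≥0} t^m·Surj(n,m)·(−log(1−r))^n/n! converges if and only if r < 1/(t+1), and when it converges its sum equals (1−r)/(1−(t+1)r). -/
open Finset in
lemma surj_le (n m : ℕ) : Surj n m ≤ m ^ n := by
  rw [Surj, Nat.card_eq_fintype_card]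
  calc Fintype.card {f : Fin n → Fin m // Function.Surjective f}
      ≤ Fintype.card (Fin n → Fin m) := Fintype.card_subtype_le _
    _ = m ^ n := by simp [Fintype.card_fun]

/-- fiber equiv -/
def fiberEquiv (n m : ℕ) (S : Finset (Fin m)) :
    {f : Fin n → Fin m // Finset.image f Finset.univ = S} ≃
      {g : Fin n → {x // x ∈ S} // Function.Surjective g} where
  toFun f := ⟨fun i => ⟨f.1 i, by
      have : f.1 i ∈ Finset.image f.1 Finset.univ := Finset.mem_image_of_mem _ (Finset.mem_univ i)
      rwa [f.2] at this⟩,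
    by rintro ⟨y, hy⟩
       rw [← f.2] at hy
       obtain ⟨i, -, hi⟩ := Finset.mem_image.1 hy
       exact ⟨i, Subtype.ext hi⟩⟩
  invFun g := ⟨fun i => (g.1 i).1, by
    ext y
    constructor
    · intro hy
      obtain ⟨i, -, hi⟩ := Finset.mem_image.1 hy
      exact hi ▸ (g.1 i).2
    · intro hy
      obtain ⟨i, hi⟩ := g.2 ⟨y, hy⟩
      exact Finset.mem_image.2 ⟨i, Finset.mem_univ i, congrArg Subtype.val hi⟩⟩
  left_inv f := rfl
  right_inv g := rfl

lemma card_fiber (n m : ℕ) (S : Finset (Fin m)) :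
    Fintype.card {f : Fin n → Fin m // Finset.image f Finset.univ = S} = Surj n S.card := by
  rw [Surj, Nat.card_eq_fintype_card]
  refine Fintype.card_congr ?_
  refine (fiberEquiv n m S).trans ?_
  have e2 : {x // x ∈ S} ≃ Fin S.card := Fintype.equivFinOfCardEq (Fintype.card_coe S)
  exact Equiv.subtypeEquiv (Equiv.arrowCongr (Equiv.refl _) e2)
    (fun g => by
      constructor
      · intro h
        simpa [Equiv.arrowCongr] using e2.surjective.comp h
      · intro h
        have := e2.symm.surjective.comp h
        simpa [Function.comp_def] using this)

open Finset in
lemma pow_eq_sum_surj (n m : ℕ) : m ^ n = ∑ k ∈ range (m + 1), m.choose k * Surj n k := by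
  classical
  have h0 : m ^ n = Fintype.card (Fin n → Fin m) := by simp [Fintype.card_fun]
  have h1 : (Finset.univ : Finset (Fin n → Fin m)).card =
      ∑ S ∈ (Finset.univ : Finset (Finset (Fin m))),
        ((Finset.univ : Finset (Fin n → Fin m)).filter fun f => Finset.image f Finset.univ = S).card :=
    Finset.card_eq_sum_card_fiberwise (fun f _ => Finset.mem_univ _)
  have h2 : ∀ S : Finset (Fin m),
      ((Finset.univ : Finset (Fin n → Fin m)).filter fun f => Finset.image f Finset.univ = S).card
        = Surj n S.card := by
    intro S
    rw [← card_fiber n m S, Fintype.card_subtype]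
  rw [h0, ← Finset.card_univ, h1]
  have h3 : ∑ S : Finset (Fin m), Surj n S.card =
      ∑ k ∈ range (m + 1), m.choose k * Surj n k := by
    have huniv : (Finset.univ : Finset (Finset (Fin m))) =
        (Finset.univ : Finset (Fin m)).powerset := by
      ext S; simp
    rw [huniv, Finset.sum_powerset]
    simp only [Finset.card_univ, Fintype.card_fin]
    refine Finset.sum_congr rfl fun k _ => ?_
    rw [Finset.sum_powersetCard k Finset.univ (fun j => Surj n j)]
    simp [Finset.card_univ, mul_comm, smul_eq_mul]
  rw [← h3]
  exact Finset.sum_congr rfl fun S _ => h2 S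

lemma surj_summable (m : ℕ) (x : ℝ) :
    Summable (fun n : ℕ => (Surj n m : ℝ) * x ^ n / (Nat.factorial n : ℝ)) := by
  refine Summable.of_norm_bounded (Real.summable_pow_div_factorial (m * |x|)) fun n => ?_
  rw [norm_div, norm_mul, Real.norm_natCast, Real.norm_natCast, norm_pow, Real.norm_eq_abs]
  rw [mul_pow]
  gcongr
  exact_mod_cast surj_le n m

open Finset in
lemma surj_egf (m : ℕ) (x : ℝ) :
    ∑' n : ℕ, (Surj n m : ℝ) * x ^ n / (Nat.factorial n : ℝ) = (Real.exp x - 1) ^ m := by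
  induction m using Nat.strong_induction_on with
  | _ m ih =>
    have hexp : Real.exp (m * x) = ∑' n : ℕ, (m * x) ^ n / (Nat.factorial n : ℝ) := by
      rw [Real.exp_eq_exp_ℝ, NormedSpace.exp_eq_tsum_div]
    have h1 : Real.exp (m * x) =
        ∑ k ∈ range (m + 1), (m.choose k : ℝ) *
          ∑' n : ℕ, (Surj n k : ℝ) * x ^ n / (Nat.factorial n : ℝ) := by
      rw [hexp]
      have : ∀ n : ℕ, (m * x) ^ n / (Nat.factorial n : ℝ) =
          ∑ k ∈ range (m + 1), (m.choose k : ℝ) * ((Surj n k : ℝ) * x ^ n / (Nat.factorial n : ℝ)) := by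
        intro n
        have hm : ((m : ℝ)) ^ n = ∑ k ∈ range (m + 1), (m.choose k : ℝ) * (Surj n k : ℝ) := by
          exact_mod_cast congrArg (Nat.cast : ℕ → ℝ) (pow_eq_sum_surj n m)
        rw [mul_pow, hm, Finset.sum_mul, Finset.sum_div]
        exact Finset.sum_congr rfl fun k _ => by ring
      simp_rw [this]
      rw [Summable.tsum_finsetSum fun k _ => ((surj_summable k x).mul_left _)]
      exact Finset.sum_congr rfl fun k _ => tsum_mul_left
    have h2 : Real.exp (m * x) =
        ∑ k ∈ range (m + 1), (m.choose k : ℝ) * (Real.exp x - 1) ^ k := by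
      rw [Real.exp_nat_mul]
      have := add_pow (Real.exp x - 1) 1 m
      simp only [one_pow, mul_one, sub_add_cancel] at this
      rw [this]
      exact Finset.sum_congr rfl fun k _ => by ring
    have h3 := h1.symm.trans h2
    rw [Finset.sum_range_succ, Finset.sum_range_succ] at h3
    have h4 : ∑ k ∈ range m, (m.choose k : ℝ) *
        ∑' n : ℕ, (Surj n k : ℝ) * x ^ n / (Nat.factorial n : ℝ) =
        ∑ k ∈ range m, (m.choose k : ℝ) * (Real.exp x - 1) ^ k :=
      Finset.sum_congr rfl fun k hk => by rw [ih k (Finset.mem_range.1 hk)]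
    rw [h4, Nat.choose_self] at h3
    simpa using h3

/-- For every real `t ≥ 0` and `0 ≤ r < 1`, the double series with nonnegative terms
`Σ_{m,n} t^m·Surj(n,m)·(−log(1−r))^n/n!` converges iff `r < 1/(t+1)`, and when it
converges its sum equals `(1−r)/(1−(t+1)r)`. -/
theorem stmt4 (t r : ℝ) (ht : 0 ≤ t) (hr0 : 0 ≤ r) (hr1 : r < 1) :
    (Summable (fun p : ℕ × ℕ =>
        t ^ p.1 * (Surj p.2 p.1 : ℝ) * (-Real.log (1 - r)) ^ p.2 / (Nat.factorial p.2 : ℝ))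
      ↔ r < 1 / (t + 1)) ∧
    (r < 1 / (t + 1) →
      ∑' p : ℕ × ℕ,
        t ^ p.1 * (Surj p.2 p.1 : ℝ) * (-Real.log (1 - r)) ^ p.2 / (Nat.factorial p.2 : ℝ)
        = (1 - r) / (1 - (t + 1) * r)) := by
  have h1r : (0:ℝ) < 1 - r := by linarith
  set x : ℝ := -Real.log (1 - r) with hxdef
  have hx : 0 ≤ x := by
    have : Real.log (1 - r) ≤ 0 := Real.log_nonpos (by linarith) (by linarith)
    simpa [hxdef] using this
  have hE : Real.exp x - 1 = r / (1 - r) := by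
    rw [hxdef, Real.exp_neg, Real.exp_log h1r]
    field_simp
    ring
  set q : ℝ := t * (r / (1 - r)) with hqdef
  have hq0 : 0 ≤ q := mul_nonneg ht (div_nonneg hr0 h1r.le)
  set f : ℕ × ℕ → ℝ := fun p =>
    t ^ p.1 * (Surj p.2 p.1 : ℝ) * x ^ p.2 / (Nat.factorial p.2 : ℝ) with hfdef
  have hnonneg : ∀ p, 0 ≤ f p := fun p => by
    apply div_nonneg _ (by positivity)
    exact mul_nonneg (mul_nonneg (pow_nonneg ht _) (Nat.cast_nonneg _)) (pow_nonneg hx _)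
  have hinner : ∀ m, Summable (fun n => f (m, n)) := fun m => by
    refine ((surj_summable m x).mul_left (t ^ m)).congr fun n => ?_
    simp only [hfdef]; ring
  have htsum_inner : ∀ m, ∑' n, f (m, n) = q ^ m := fun m => by
    have : ∀ n : ℕ, f (m, n) = t ^ m * ((Surj n m : ℝ) * x ^ n / (Nat.factorial n : ℝ)) := by
      intro n; simp only [hfdef]; ring
    rw [tsum_congr this, tsum_mul_left, surj_egf, hE, hqdef, mul_pow]
  have hq_iff : q < 1 ↔ r < 1 / (t + 1) := by
    rw [hqdef, mul_div_assoc', div_lt_one h1r, lt_div_iff₀ (by linarith : (0:ℝ) < t + 1)]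
    constructor <;> intro h <;> nlinarith
  have hsum_iff : Summable f ↔ r < 1 / (t + 1) := by
    rw [summable_prod_of_nonneg hnonneg]
    constructor
    · rintro ⟨-, h2⟩
      rw [← hq_iff]
      have h3 : Summable (fun m : ℕ => q ^ m) := h2.congr fun m => htsum_inner m
      have h4 := summable_geometric_iff_norm_lt_one.mp h3
      rwa [Real.norm_eq_abs, abs_of_nonneg hq0] at h4
    · intro h
      refine ⟨hinner, ?_⟩
      have hq1 : q < 1 := hq_iff.2 h
      exact (summable_geometric_of_lt_one hq0 hq1).congr fun m => (htsum_inner m).symm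
  refine ⟨hsum_iff, fun h => ?_⟩
  have hq1 : q < 1 := hq_iff.2 h
  have hsf : Summable f := hsum_iff.2 h
  rw [Summable.tsum_prod' hsf hinner]
  calc ∑' m, ∑' n, f (m, n) = ∑' m : ℕ, q ^ m := tsum_congr htsum_inner
    _ = (1 - q)⁻¹ := tsum_geometric_of_lt_one hq0 hq1
    _ = (1 - r) / (1 - (t + 1) * r) := by
        have h2 : 0 < 1 - (t + 1) * r := by
          rw [lt_div_iff₀ (by linarith : (0:ℝ) < t + 1)] at h; linarith [mul_comm r (t+1)]
        have hone : 1 - q = (1 - (t + 1) * r) / (1 - r) := by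
          rw [hqdef]; field_simp; ring
        rw [hone, inv_div]
end

section
/- Let ρ be a complex number with ρ^4 = −1. Then for every complex number z with 0 < |z| < 1, exp(−Σ_{k≥1} ζ(4k)·(−1)^k·z^{4k}/k) = (sin(i·ρ·π·z)/(i·ρ·π·z)) · (sin(ρ·π·z)/(ρ·π·z)), where the series Σ_{k≥1} ζ(4k)·(−1)^k·z^{4k}/k converges absolutely for |z| < 1. -/
open Real Filter Topology

noncomputable def zterm (w : ℂ) (k : ℕ) : ℂ :=
  riemannZeta ((2 * (k + 1) : ℕ) : ℂ) * w ^ (2 * (k + 1)) / ((k : ℂ) + 1)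

noncomputable def Fterm (w : ℂ) (p : ℕ × ℕ) : ℂ :=
  (w / ((p.2 : ℂ) + 1)) ^ (2 * (p.1 + 1)) / ((p.1 : ℂ) + 1)

lemma norm_nat_add_one (n : ℕ) : ‖((n : ℂ) + 1)‖ = (n : ℝ) + 1 := by
  have h : ((n : ℂ) + 1) = ((n + 1 : ℕ) : ℂ) := by push_cast; ring
  rw [h, Complex.norm_natCast]; push_cast; ring

lemma norm_q_le {w : ℂ} (hw : ‖w‖ < 1) (n : ℕ) :
    ‖(w / ((n : ℂ) + 1)) ^ 2‖ ≤ 1 / ((n : ℝ) + 1) ^ 2 := by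
  rw [norm_pow, norm_div, norm_nat_add_one, div_pow]
  have h : (0 : ℝ) < ((n : ℝ) + 1) ^ 2 := by positivity
  exact (div_le_div_iff_of_pos_right h).mpr (by nlinarith [norm_nonneg w])

lemma norm_q_le_w {w : ℂ} (n : ℕ) :
    ‖(w / ((n : ℂ) + 1)) ^ 2‖ ≤ ‖w‖ ^ 2 := by
  rw [norm_pow, norm_div, norm_nat_add_one]
  have h1 : (1 : ℝ) ≤ (n : ℝ) + 1 := by have := Nat.cast_nonneg (α := ℝ) n; linarith
  exact pow_le_pow_left₀ (by positivity) (div_le_self (norm_nonneg w) h1) 2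

lemma norm_q_lt_one {w : ℂ} (hw : ‖w‖ < 1) (n : ℕ) :
    ‖(w / ((n : ℂ) + 1)) ^ 2‖ < 1 :=
  (norm_q_le_w n).trans_lt (by nlinarith [norm_nonneg w])

lemma summable_norm_Fterm {w : ℂ} (hw : ‖w‖ < 1) :
    Summable (fun p : ℕ × ℕ => ‖Fterm w p‖) := by
  have hC : Summable (fun n : ℕ => 1 / ((n : ℝ) + 1) ^ 2) := by
    have h := (summable_nat_add_iff 1).mpr
      (Real.summable_one_div_nat_pow.mpr (by norm_num : 1 < 2))
    exact h.congr fun n => by push_cast; ring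
  have hg : Summable (fun k : ℕ => (‖w‖ ^ 2) ^ k) :=
    summable_geometric_of_lt_one (by positivity) (by nlinarith [norm_nonneg w])
  have hb := hg.mul_of_nonneg hC (fun k => by positivity) (fun n => by positivity)
  refine hb.of_nonneg_of_le (fun p => norm_nonneg _) fun p => ?_
  obtain ⟨k, n⟩ := p
  have hk1 : (1 : ℝ) ≤ ‖((k : ℂ) + 1)‖ := by rw [norm_nat_add_one]; have := Nat.cast_nonneg (α := ℝ) k; linarith
  calc ‖Fterm w (k, n)‖
      = ‖(w / ((n : ℂ) + 1)) ^ 2‖ ^ (k + 1) / ‖((k : ℂ) + 1)‖ := by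
        rw [Fterm, pow_mul, norm_div, norm_pow]
    _ ≤ ‖(w / ((n : ℂ) + 1)) ^ 2‖ ^ (k + 1) := div_le_self (by positivity) hk1
    _ = ‖(w / ((n : ℂ) + 1)) ^ 2‖ ^ k * ‖(w / ((n : ℂ) + 1)) ^ 2‖ := pow_succ _ _
    _ ≤ (‖w‖ ^ 2) ^ k * (1 / ((n : ℝ) + 1) ^ 2) := by
        exact mul_le_mul (pow_le_pow_left₀ (norm_nonneg _) (norm_q_le_w n) k)
          (norm_q_le hw n) (norm_nonneg _) (by positivity)

lemma hasSum_Fterm_fiber_k {w : ℂ} (hw : ‖w‖ < 1) (k : ℕ) :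
    HasSum (fun n : ℕ => Fterm w (k, n)) (zterm w k) := by
  have hC : Summable (fun n : ℕ => 1 / ((n : ℝ) + 1) ^ 2) := by
    have h := (summable_nat_add_iff 1).mpr
      (Real.summable_one_div_nat_pow.mpr (by norm_num : 1 < 2))
    exact h.congr fun n => by push_cast; ring
  have hsum : Summable (fun n : ℕ => 1 / ((n : ℂ) + 1) ^ (2 * (k + 1))) := by
    apply Summable.of_norm
    refine hC.of_nonneg_of_le (fun n => norm_nonneg _) fun n => ?_
    rw [norm_div, norm_one, norm_pow, norm_nat_add_one]
    have h1 : (1 : ℝ) ≤ (n : ℝ) + 1 := by have := Nat.cast_nonneg (α := ℝ) n; linarith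
    exact one_div_le_one_div_of_le (by positivity)
      (pow_le_pow_right₀ h1 (by omega))
  have hz : riemannZeta ((2 * (k + 1) : ℕ) : ℂ)
      = ∑' n : ℕ, 1 / ((n : ℂ) + 1) ^ (2 * (k + 1)) := by
    rw [zeta_eq_tsum_one_div_nat_add_one_cpow (by
      rw [Complex.natCast_re]; exact_mod_cast (by omega : 1 < 2 * (k + 1)))]
    exact tsum_congr fun n => by rw [Complex.cpow_natCast]
  have h := hsum.hasSum
  rw [← hz] at h
  have h2 := h.mul_right (w ^ (2 * (k + 1)) / ((k : ℂ) + 1))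
  have e : (fun n : ℕ => 1 / ((n : ℂ) + 1) ^ (2 * (k + 1)) *
      (w ^ (2 * (k + 1)) / ((k : ℂ) + 1))) = fun n : ℕ => Fterm w (k, n) := by
    funext n
    rw [Fterm, div_pow]
    ring
  rw [e] at h2
  rw [zterm, mul_div_assoc]
  exact h2

lemma hasSum_Fterm_fiber_n {w : ℂ} (hw : ‖w‖ < 1) (n : ℕ) :
    HasSum (fun k : ℕ => Fterm w (k, n))
      (-Complex.log (1 - (w / ((n : ℂ) + 1)) ^ 2)) := by
  have h := Complex.hasSum_taylorSeries_neg_log (norm_q_lt_one hw n)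
  have hinj : Function.Injective (fun k : ℕ => k + 1) := fun a b h => by simpa using h
  have hside : ∀ x ∉ Set.range (fun k : ℕ => k + 1),
      ((w / ((n : ℂ) + 1)) ^ 2) ^ x / (x : ℂ) = 0 := by
    intro x hx
    have hx0 : x = 0 := by
      by_contra h0
      exact hx ⟨x - 1, by simp; omega⟩
    simp [hx0]
  have h2 := (Function.Injective.hasSum_iff hinj hside).mpr h
  refine h2.congr_fun fun k => ?_
  simp only [Function.comp_apply]
  rw [Fterm, pow_mul]
  push_cast
  ring

lemma zterm_hasSum {w : ℂ} (hw : ‖w‖ < 1) :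
    HasSum (zterm w) (∑' p : ℕ × ℕ, Fterm w p) :=
  ((summable_norm_Fterm hw).of_norm.hasSum).prod_fiberwise (hasSum_Fterm_fiber_k hw)

lemma log_hasSum {w : ℂ} (hw : ‖w‖ < 1) :
    HasSum (fun n : ℕ => -Complex.log (1 - (w / ((n : ℂ) + 1)) ^ 2))
      (∑' p : ℕ × ℕ, Fterm w p) := by
  have hs := (summable_norm_Fterm hw).of_norm.hasSum
  have hswap : HasSum (fun p : ℕ × ℕ => Fterm w (p.2, p.1)) (∑' p : ℕ × ℕ, Fterm w p) :=
    ((Equiv.prodComm ℕ ℕ).hasSum_iff).mpr hs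
  exact hswap.prod_fiberwise fun n => hasSum_Fterm_fiber_n hw n

lemma summable_norm_zterm {w : ℂ} (hw : ‖w‖ < 1) :
    Summable (fun k : ℕ => ‖zterm w k‖) := by
  have hF := summable_norm_Fterm hw
  have hB : Summable (fun k : ℕ => ∑' n : ℕ, ‖Fterm w (k, n)‖) := hF.prod
  refine hB.of_nonneg_of_le (fun k => norm_nonneg _) fun k => ?_
  rw [← (hasSum_Fterm_fiber_k hw k).tsum_eq]
  exact norm_tsum_le_tsum_norm (hF.prod_factor k)

lemma exp_neg_tsum_zterm {w : ℂ} (hw : ‖w‖ < 1) (hw0 : w ≠ 0) :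
    Complex.exp (-∑' k : ℕ, zterm w k) = Complex.sin ((π : ℂ) * w) / ((π : ℂ) * w) := by
  have hT : (∑' k : ℕ, zterm w k) = ∑' p : ℕ × ℕ, Fterm w p := (zterm_hasSum hw).tsum_eq
  have hne : ∀ n : ℕ, (1 : ℂ) - (w / ((n : ℂ) + 1)) ^ 2 ≠ 0 := by
    intro n h0
    rw [sub_eq_zero] at h0
    have := norm_q_lt_one hw n
    rw [← h0] at this
    simp at this
  have hten : Filter.Tendsto
      (fun N : ℕ => ∏ n ∈ Finset.range N, ((1 : ℂ) - w ^ 2 / ((n : ℂ) + 1) ^ 2))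
      Filter.atTop (nhds (Complex.exp (-∑' k : ℕ, zterm w k))) := by
    rw [hT]
    have h2 := (log_hasSum hw).neg.tendsto_sum_nat
    have h3 := (Complex.continuous_exp.tendsto _).comp h2
    refine h3.congr fun N => ?_
    simp only [Function.comp_apply]
    rw [Complex.exp_sum]
    refine Finset.prod_congr rfl fun n _ => ?_
    rw [neg_neg, Complex.exp_log (hne n), div_pow]
  have hπw : ((π : ℂ) * w) ≠ 0 :=
    mul_ne_zero (by exact_mod_cast Real.pi_ne_zero) hw0
  have h4 : Filter.Tendsto
      (fun N : ℕ => ∏ n ∈ Finset.range N, ((1 : ℂ) - w ^ 2 / ((n : ℂ) + 1) ^ 2))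
      Filter.atTop (nhds (Complex.sin ((π : ℂ) * w) / ((π : ℂ) * w))) := by
    have h5 := (Complex.tendsto_euler_sin_prod w).div_const ((π : ℂ) * w)
    refine h5.congr fun N => ?_
    rw [mul_div_cancel_left₀ _ hπw]
  exact tendsto_nhds_unique hten h4

/-- Let `ρ` be a complex number with `ρ^4 = −1`. For every complex `z` with
`0 < |z| < 1`,
`exp(−Σ_{k≥1} ζ(4k)·(−1)^k·z^{4k}/k) = (sin(i·ρ·π·z)/(i·ρ·π·z))·(sin(ρ·π·z)/(ρ·π·z))`,
the series converging absolutely for `|z| < 1`. -/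
theorem stmt13 (ρ : ℂ) (hρ : ρ ^ 4 = -1) (z : ℂ) (hz0 : z ≠ 0) (hz : ‖z‖ < 1) :
    Summable (fun k : ℕ =>
      ‖riemannZeta (4 * ((k : ℂ) + 1)) * (-1 : ℂ) ^ (k + 1) * z ^ (4 * (k + 1)) /
        ((k : ℂ) + 1)‖) ∧
    Complex.exp (-∑' k : ℕ,
        riemannZeta (4 * ((k : ℂ) + 1)) * (-1 : ℂ) ^ (k + 1) * z ^ (4 * (k + 1)) /
          ((k : ℂ) + 1)) =
      (Complex.sin (Complex.I * ρ * (π : ℂ) * z) / (Complex.I * ρ * (π : ℂ) * z)) *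
        (Complex.sin (ρ * (π : ℂ) * z) / (ρ * (π : ℂ) * z)) := by
  have hρ0 : ρ ≠ 0 := by
    intro h; rw [h] at hρ; norm_num at hρ
  have hρn : ‖ρ‖ = 1 := by
    have h4 : ‖ρ‖ ^ 4 = 1 := by rw [← norm_pow, hρ]; simp
    nlinarith [norm_nonneg ρ, sq_nonneg (‖ρ‖ - 1), sq_nonneg (‖ρ‖ + 1), sq_nonneg (‖ρ‖ ^ 2 - 1), sq_nonneg (‖ρ‖ ^ 2 + 1)]
  set w : ℂ := ρ * z with hwdef
  set w2 : ℂ := Complex.I * (ρ * z) with hw2def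
  have hw : ‖w‖ < 1 := by rw [hwdef, norm_mul, hρn, one_mul]; exact hz
  have hw0 : w ≠ 0 := mul_ne_zero hρ0 hz0
  have hw2 : ‖w2‖ < 1 := by rw [hw2def, norm_mul, Complex.norm_I, one_mul]; exact hw
  have hw20 : w2 ≠ 0 := mul_ne_zero Complex.I_ne_zero hw0
  have hc4 : ∀ k : ℕ, 2 * (2 * k + 1 + 1) = 4 * (k + 1) := fun k => by ring
  have hA : ∀ k : ℕ,
      riemannZeta (4 * ((k : ℂ) + 1)) * (-1 : ℂ) ^ (k + 1) * z ^ (4 * (k + 1)) /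
        ((k : ℂ) + 1) = 2 * zterm w (2 * k + 1) := by
    intro k
    rw [zterm, hc4 k]
    have e1 : ((4 * (k + 1) : ℕ) : ℂ) = 4 * ((k : ℂ) + 1) := by push_cast; ring
    rw [e1]
    have e3 : w ^ (4 * (k + 1)) = (-1 : ℂ) ^ (k + 1) * z ^ (4 * (k + 1)) := by
      have hr : ρ ^ (4 * (k + 1)) = (-1 : ℂ) ^ (k + 1) := by rw [pow_mul, hρ]
      rw [hwdef, mul_pow, hr]
    rw [e3]
    have hcast : (((2 * k + 1 : ℕ)) : ℂ) + 1 = 2 * ((k : ℂ) + 1) := by push_cast; ring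
    rw [hcast]
    have hc : ((k : ℂ) + 1) ≠ 0 := by
      exact_mod_cast Nat.cast_add_one_ne_zero (R := ℂ) k
    field_simp
  have hB : ∀ k : ℕ, zterm w2 (2 * k + 1) = zterm w (2 * k + 1) := by
    intro k
    have hI : w2 ^ (2 * (2 * k + 1 + 1)) = w ^ (2 * (2 * k + 1 + 1)) := by
      rw [hw2def, mul_pow, hc4 k, pow_mul, Complex.I_pow_four, one_pow, one_mul]
    rw [zterm, zterm, hI]
  have hC : ∀ m : ℕ, zterm w (2 * m) + zterm w2 (2 * m) = 0 := by
    intro m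
    have hI : w2 ^ (2 * (2 * m + 1)) = -(w ^ (2 * (2 * m + 1))) := by
      rw [hw2def, mul_pow, pow_mul, Complex.I_sq,
        Odd.neg_one_pow ⟨m, by ring⟩, neg_one_mul]
    rw [zterm, zterm, hI]
    ring
  have hinj2 : Function.Injective (fun k : ℕ => 2 * k + 1) := fun a b h => by
    simpa using h
  constructor
  · have hs1 := summable_norm_zterm hw
    have hsub : Summable (fun k : ℕ => ‖zterm w (2 * k + 1)‖) :=
      hs1.comp_injective hinj2
    refine (hsub.mul_left 2).congr fun k => ?_
    rw [hA k, norm_mul]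
    norm_num
  · have hsw := ((summable_norm_zterm hw).of_norm).hasSum
    have hsw2 := ((summable_norm_zterm hw2).of_norm).hasSum
    have hadd := hsw.add hsw2
    have hside : ∀ x ∉ Set.range (fun k : ℕ => 2 * k + 1),
        zterm w x + zterm w2 x = 0 := by
      intro x hx
      rcases Nat.even_or_odd x with ⟨m, hm⟩ | ⟨m, hm⟩
      · have hxm : x = 2 * m := by omega
        rw [hxm]; exact hC m
      · exact absurd ⟨m, by simp; omega⟩ hx
    have h := (Function.Injective.hasSum_iff hinj2 hside).mpr hadd
    have hts : HasSum (fun k : ℕ =>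
        riemannZeta (4 * ((k : ℂ) + 1)) * (-1 : ℂ) ^ (k + 1) * z ^ (4 * (k + 1)) /
          ((k : ℂ) + 1)) ((∑' k : ℕ, zterm w k) + ∑' k : ℕ, zterm w2 k) := by
      refine h.congr_fun fun k => ?_
      simp only [Function.comp_apply]
      rw [hA k, hB k]
      ring
    rw [hts.tsum_eq, neg_add, Complex.exp_add,
      exp_neg_tsum_zterm hw hw0, exp_neg_tsum_zterm hw2 hw20]
    have e1 : (π : ℂ) * w = ρ * (π : ℂ) * z := by rw [hwdef]; ring
    have e2 : (π : ℂ) * w2 = Complex.I * ρ * (π : ℂ) * z := by rw [hw2def]; ring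
    rw [e1, e2, mul_comm]
end
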